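/- arXiv:1011.0319 — 2 statements merged into one kernel-verified Lean document; each statement's English description precedes it below -/
import Mathlib

section
/- Let q ≥ 3, h = 0 and β = β_c. Then the set of global minimum points of f_{β_c,0} on the simplex ℋ consists of exactly q+1 points: the symmetric point (1/q, …, 1/q) together with the q coordinate permutations of the vector ((q−1)/q, 1/(q(q−1)), …, 1/(q(q−1))). -/
open Finset

noncomputable section

namespace CWP

/-- The probability simplex ℋ in ℝ^q. -/
def simplexH (q : ℕ) : Set (Fin q → ℝ) :=
  {x | (∑ i, x i) = 1 ∧ ∀ i, 0 ≤ x i}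

/-- The free-energy functional f_{β,h} of the Curie-Weiss-Potts model. -/
def fFE (q : ℕ) [NeZero q] (β h : ℝ) (x : Fin q → ℝ) : ℝ :=
  (∑ i, x i * Real.log (q * x i)) - β / 2 * (∑ i, x i ^ 2) - h * x 0

/-- The set of global minimum points of f_{β,h} on the simplex ℋ. -/
def minSetF (q : ℕ) [NeZero q] (β h : ℝ) : Set (Fin q → ℝ) :=
  {x | x ∈ simplexH q ∧ ∀ y ∈ simplexH q, fFE q β h x ≤ fFE q β h y}

/-- h₀ = log(q-1) - 2(q-2)/q. -/
def h0 (q : ℕ) : ℝ := Real.log ((q : ℝ) - 1) - 2 * ((q : ℝ) - 2) / q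

/-- The critical line h_T. -/
def onCriticalLine (q : ℕ) (β h : ℝ) : Prop :=
  0 ≤ h ∧ h < h0 q ∧ h = Real.log ((q : ℝ) - 1) - β * ((q : ℝ) - 2) / (2 * ((q : ℝ) - 1))

/-- The critical inverse temperature β_c for q > 2. -/
def betaC (q : ℕ) : ℝ := 2 * ((q : ℝ) - 1) / ((q : ℝ) - 2) * Real.log ((q : ℝ) - 1)

set_option linter.unusedSectionVars false
set_option linter.unusedVariables false

def bb (Q : ℝ) : ℝ := 2 * (Q - 1) / (Q - 2) * Real.log (Q - 1)

def Gf (Q s : ℝ) : ℝ :=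
  s * Real.log (Q * s) + (1 - s) * Real.log (Q * (1 - s) / (Q - 1))
    - bb Q / 2 * (s ^ 2 + (1 - s) ^ 2 / (Q - 1)) + bb Q / (2 * Q)

def gf (Q s : ℝ) : ℝ :=
  Real.log (Q * s) - Real.log (Q * (1 - s) / (Q - 1)) - bb Q * (Q * s - 1) / (Q - 1)

variable {Q : ℝ}

lemma hQ1 (hQ : 3 ≤ Q) : (0:ℝ) < Q - 1 := by linarith
lemma hQ2 (hQ : 3 ≤ Q) : (0:ℝ) < Q - 2 := by linarith
lemma hQ0 (hQ : 3 ≤ Q) : (0:ℝ) < Q := by linarith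
lemma hL (hQ : 3 ≤ Q) : 0 < Real.log (Q - 1) := Real.log_pos (by linarith)
lemma bb_pos (hQ : 3 ≤ Q) : 0 < bb Q := by
  have := hL hQ
  have := hQ1 hQ
  have := hQ2 hQ
  unfold bb
  positivity

lemma hasDerivAt_Gf (hQ : 3 ≤ Q) {s : ℝ} (h0 : 0 < s) (h1 : s < 1) :
    HasDerivAt (Gf Q) (gf Q s) s := by
  have hQ0 := hQ0 hQ
  have hQ1 := hQ1 hQ
  have hQs : Q * s ≠ 0 := by positivity
  have hu : (0:ℝ) < Q * (1 - s) / (Q - 1) := by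
    have : (0:ℝ) < 1 - s := by linarith
    positivity
  have hlog1 : HasDerivAt (fun s => Real.log (Q * s)) (1 / s) s := by
    have h := (Real.hasDerivAt_log hQs).comp s ((hasDerivAt_id s).const_mul Q)
    refine h.congr_deriv (Eq.symm ?_)
    field_simp
  have hA : HasDerivAt (fun s => s * Real.log (Q * s)) (Real.log (Q * s) + 1) s := by
    have h := (hasDerivAt_id s).mul hlog1
    refine h.congr_deriv (Eq.symm ?_)
    field_simp; simp only [id]; ring
  have hin : HasDerivAt (fun s : ℝ => Q * (1 - s) / (Q - 1)) (-(Q / (Q - 1))) s := by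
    have h := (((hasDerivAt_id s).const_sub 1).const_mul Q).div_const (Q - 1)
    refine h.congr_deriv (Eq.symm ?_)
    ring
  have h1s : (1:ℝ) - s ≠ 0 := by linarith
  have hQ1' : Q - 1 ≠ 0 := ne_of_gt hQ1
  have hlog2 : HasDerivAt (fun s => Real.log (Q * (1 - s) / (Q - 1))) (-(1 / (1 - s))) s := by
    have h := (Real.hasDerivAt_log (ne_of_gt hu)).comp s hin
    refine h.congr_deriv (Eq.symm ?_)
    field_simp
  have hB : HasDerivAt (fun s => (1 - s) * Real.log (Q * (1 - s) / (Q - 1)))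
      (-Real.log (Q * (1 - s) / (Q - 1)) - 1) s := by
    have h := ((hasDerivAt_id s).const_sub 1).mul hlog2
    refine h.congr_deriv (Eq.symm ?_)
    simp only [id]
    field_simp
    ring
  have hquad : HasDerivAt (fun s : ℝ => bb Q / 2 * (s ^ 2 + (1 - s) ^ 2 / (Q - 1)))
      (bb Q / 2 * (2 * s - 2 * (1 - s) / (Q - 1))) s := by
    have h1 : HasDerivAt (fun s : ℝ => s ^ 2) (2 * s) s := by
      simpa using hasDerivAt_pow 2 s
    have h2 : HasDerivAt (fun s : ℝ => (1 - s) ^ 2) (-(2 * (1 - s))) s := by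
      have h := (hasDerivAt_pow 2 (1 - s)).comp s ((hasDerivAt_id s).const_sub 1)
      refine h.congr_deriv (Eq.symm ?_)
      push_cast
      ring
    have h := ((h1.add (h2.div_const (Q - 1))).const_mul (bb Q / 2))
    refine h.congr_deriv (Eq.symm ?_)
    ring
  have h := ((hA.add hB).sub hquad).add_const (bb Q / (2 * Q))
  refine h.congr_deriv (Eq.symm ?_)
  unfold gf
  have : Q - 1 ≠ 0 := ne_of_gt hQ1
  field_simp
  ring

def dgf (Q s : ℝ) : ℝ := 1 / s + 1 / (1 - s) - bb Q * Q / (Q - 1)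

lemma hasDerivAt_gf (hQ : 3 ≤ Q) {s : ℝ} (h0 : 0 < s) (h1 : s < 1) :
    HasDerivAt (gf Q) (dgf Q s) s := by
  have hQ0 := hQ0 hQ
  have hQ1 := hQ1 hQ
  have hQs : Q * s ≠ 0 := by positivity
  have h1s : (1:ℝ) - s ≠ 0 := by linarith
  have hQ1' : Q - 1 ≠ 0 := ne_of_gt hQ1
  have hu : (0:ℝ) < Q * (1 - s) / (Q - 1) := by
    have : (0:ℝ) < 1 - s := by linarith
    positivity
  have hlog1 : HasDerivAt (fun s => Real.log (Q * s)) (1 / s) s := by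
    have h := (Real.hasDerivAt_log hQs).comp s ((hasDerivAt_id s).const_mul Q)
    refine h.congr_deriv (Eq.symm ?_)
    field_simp
  have hin : HasDerivAt (fun s : ℝ => Q * (1 - s) / (Q - 1)) (-(Q / (Q - 1))) s := by
    have h := (((hasDerivAt_id s).const_sub 1).const_mul Q).div_const (Q - 1)
    refine h.congr_deriv (Eq.symm ?_)
    ring
  have hlog2 : HasDerivAt (fun s => Real.log (Q * (1 - s) / (Q - 1))) (-(1 / (1 - s))) s := by
    have h := (Real.hasDerivAt_log (ne_of_gt hu)).comp s hin
    refine h.congr_deriv (Eq.symm ?_)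
    field_simp
  have hlin : HasDerivAt (fun s : ℝ => bb Q * (Q * s - 1) / (Q - 1)) (bb Q * Q / (Q - 1)) s := by
    have h := ((((hasDerivAt_id s).const_mul Q).sub_const 1).const_mul (bb Q)).div_const (Q - 1)
    refine h.congr_deriv (Eq.symm ?_)
    ring
  have h := (hlog1.sub hlog2).sub hlin
  refine h.congr_deriv (Eq.symm ?_)
  unfold dgf
  ring

lemma Gf_at_unif (hQ : 3 ≤ Q) : Gf Q (1 / Q) = 0 := by
  have hQ0 := hQ0 hQ
  have hQ1' : Q - 1 ≠ 0 := ne_of_gt (hQ1 hQ)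
  have hQ0' : Q ≠ 0 := ne_of_gt hQ0
  have e1 : Q * (1 / Q) = 1 := by field_simp
  have e2 : Q * (1 - 1 / Q) / (Q - 1) = 1 := by field_simp
  unfold Gf
  rw [e1, e2, Real.log_one]
  field_simp
  ring

lemma Gf_at_star (hQ : 3 ≤ Q) : Gf Q (1 - 1 / Q) = 0 := by
  have hQ0 := hQ0 hQ
  have hQ1' : Q - 1 ≠ 0 := ne_of_gt (hQ1 hQ)
  have hQ2' : Q - 2 ≠ 0 := ne_of_gt (hQ2 hQ)
  have hQ0' : Q ≠ 0 := ne_of_gt hQ0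
  have e1 : Q * (1 - 1 / Q) = Q - 1 := by field_simp
  have e2 : Q * (1 - (1 - 1 / Q)) / (Q - 1) = (Q - 1)⁻¹ := by field_simp; ring
  unfold Gf
  rw [e1, e2, Real.log_inv]
  unfold bb
  field_simp
  ring

lemma gf_at_unif (hQ : 3 ≤ Q) : gf Q (1 / Q) = 0 := by
  have hQ0 := hQ0 hQ
  have hQ1' : Q - 1 ≠ 0 := ne_of_gt (hQ1 hQ)
  have hQ0' : Q ≠ 0 := ne_of_gt hQ0
  have e1 : Q * (1 / Q) = 1 := by field_simp
  have e2 : Q * (1 - 1 / Q) / (Q - 1) = 1 := by field_simp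
  unfold gf
  rw [e1, e2, Real.log_one]
  simp

lemma gf_at_star (hQ : 3 ≤ Q) : gf Q (1 - 1 / Q) = 0 := by
  have hQ0 := hQ0 hQ
  have hQ1' : Q - 1 ≠ 0 := ne_of_gt (hQ1 hQ)
  have hQ2' : Q - 2 ≠ 0 := ne_of_gt (hQ2 hQ)
  have hQ0' : Q ≠ 0 := ne_of_gt hQ0
  have e1 : Q * (1 - 1 / Q) = Q - 1 := by field_simp
  have e2 : Q * (1 - (1 - 1 / Q)) / (Q - 1) = (Q - 1)⁻¹ := by field_simp; ring
  unfold gf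
  rw [e1, e2, Real.log_inv]
  unfold bb
  field_simp
  ring

lemma ineq1 (hQ : 3 ≤ Q) : 2 * (Q - 2) < Q * Real.log (Q - 1) := by
  set F : ℝ → ℝ := fun x => Real.log (x - 1) + 4 / x with hF
  have hderiv : ∀ x ∈ Set.Ioi (3:ℝ) ∪ {3}, HasDerivAt F (1 / (x - 1) - 4 / x ^ 2) x := by
    intro x hx
    have hx3 : 3 ≤ x := by
      rcases hx with hx | hx
      · exact le_of_lt hx
      · simp_all
    have hx1 : x - 1 ≠ 0 := by intro h; nlinarith
    have hx0 : x ≠ 0 := by intro h; nlinarith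
    have h1 : HasDerivAt (fun x : ℝ => Real.log (x - 1)) (1 / (x - 1)) x := by
      have h := (Real.hasDerivAt_log hx1).comp x ((hasDerivAt_id x).sub_const 1)
      refine h.congr_deriv (Eq.symm ?_)
      field_simp
    have h2 : HasDerivAt (fun x : ℝ => 4 / x) (-(4 / x ^ 2)) x := by
      have h3 := (hasDerivAt_inv hx0).const_mul (4:ℝ)
      refine h3.congr_deriv (Eq.symm ?_)
      rw [div_eq_mul_inv]
      ring
    have := h1.add h2
    refine this.congr_deriv (Eq.symm ?_)
    ring
  have hmono : MonotoneOn F (Set.Ici 3) := by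
    apply monotoneOn_of_deriv_nonneg (convex_Ici 3)
    · intro x hx
      rcases eq_or_lt_of_le hx.out with h | h
      · exact ((hderiv x (Or.inr (by simp [← h]))).continuousAt).continuousWithinAt
      · exact ((hderiv x (Or.inl h)).continuousAt).continuousWithinAt
    · intro x hx
      rw [interior_Ici] at hx
      exact ((hderiv x (Or.inl hx)).differentiableAt).differentiableWithinAt
    · intro x hx
      rw [interior_Ici] at hx
      have hx3 : (3:ℝ) < x := hx
      rw [(hderiv x (Or.inl hx)).deriv]
      have h1 : (0:ℝ) < x - 1 := by linarith
      have h2 : (0:ℝ) < x ^ 2 := by positivity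
      rw [sub_nonneg, div_le_div_iff₀ h2 h1]
      nlinarith [sq_nonneg (x - 2)]
  have h3Q : F 3 ≤ F Q := hmono (by norm_num) (by exact hQ) hQ
  have hF3 : (2:ℝ) < F 3 := by
    have := Real.log_two_gt_d9
    simp only [hF]
    norm_num
    linarith
  have hQ0 := hQ0 hQ
  have : 2 - 4 / Q < Real.log (Q - 1) := by
    have : (2:ℝ) < Real.log (Q - 1) + 4 / Q := lt_of_lt_of_le hF3 h3Q
    linarith
  calc 2 * (Q - 2) = (2 - 4 / Q) * Q := by field_simp; ring
    _ < Real.log (Q - 1) * Q := by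
        apply mul_lt_mul_of_pos_right this hQ0
    _ = Q * Real.log (Q - 1) := mul_comm _ _

lemma two_log_lt (y : ℝ) (hy : 1 < y) : 2 * Real.log y < y - 1 / y := by
  set m : ℝ → ℝ := fun y => y - 1 / y - 2 * Real.log y with hm
  have hderiv : ∀ x : ℝ, 0 < x → HasDerivAt m (1 + 1 / x ^ 2 - 2 / x) x := by
    intro x hx
    have hx0 : x ≠ 0 := ne_of_gt hx
    have h1 : HasDerivAt (fun x : ℝ => 1 / x) (-(1 / x ^ 2)) x := by
      have h3 := hasDerivAt_inv hx0
      simpa [one_div] using h3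
    have h2 : HasDerivAt (fun x : ℝ => 2 * Real.log x) (2 / x) x := by
      have := (Real.hasDerivAt_log hx0).const_mul (2:ℝ)
      refine this.congr_deriv (Eq.symm ?_)
      ring
    have := ((hasDerivAt_id x).sub h1).sub h2
    refine this.congr_deriv (Eq.symm ?_)
    ring
  have hmono : StrictMonoOn m (Set.Ici 1) := by
    apply strictMonoOn_of_deriv_pos (convex_Ici 1)
    · intro x hx
      have hx0 : (0:ℝ) < x := lt_of_lt_of_le one_pos hx.out
      exact ((hderiv x hx0).continuousAt).continuousWithinAt
    · intro x hx
      rw [interior_Ici] at hx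
      have hx1 : (1:ℝ) < x := hx
      have hx0 : (0:ℝ) < x := by linarith
      rw [(hderiv x hx0).deriv]
      have h2 : (0:ℝ) < x ^ 2 := by positivity
      rw [show 1 + 1 / x ^ 2 - 2 / x = (x - 1) ^ 2 / x ^ 2 by field_simp; ring]
      exact div_pos (by nlinarith) (by nlinarith)
  have h01 : m 1 < m y := hmono (by norm_num) (by exact le_of_lt hy) hy
  have hm1 : m 1 = 0 := by simp [hm]
  rw [hm1] at h01
  simp only [hm] at h01
  linarith

lemma ineq2 (hQ : 3 ≤ Q) : 2 * (Q - 1) * Real.log (Q - 1) < Q * (Q - 2) := by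
  have hQ1 := hQ1 hQ
  set y := Real.sqrt (Q - 1) with hy
  have hy2 : y ^ 2 = Q - 1 := Real.sq_sqrt (le_of_lt hQ1)
  have hy1 : 1 < y := by
    rw [hy]
    have : (1:ℝ) = Real.sqrt 1 := by simp
    rw [this]
    exact Real.sqrt_lt_sqrt (by norm_num) (by linarith)
  have hy0 : 0 < y := by linarith
  have hlog : Real.log (Q - 1) = 2 * Real.log y := by
    rw [hy, Real.log_sqrt (le_of_lt hQ1)]; ring
  have hkey : Real.log (Q - 1) < y - 1 / y := by rw [hlog]; exact two_log_lt y hy1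
  have hkey2 : y * Real.log (Q - 1) < y ^ 2 - 1 := by
    have := mul_lt_mul_of_pos_left hkey hy0
    have hyy : y * (y - 1 / y) = y ^ 2 - 1 := by field_simp
    rw [hyy] at this
    exact this
  have h2y : 2 * y ≤ Q := by
    have h1 : y ≤ Real.sqrt ((Q / 2) ^ 2) := by
      rw [hy]
      apply Real.sqrt_le_sqrt
      nlinarith [sq_nonneg (Q - 2)]
    rw [Real.sqrt_sq (by linarith : (0:ℝ) ≤ Q / 2)] at h1
    linarith
  have hQ2 := hQ2 hQ
  nlinarith [mul_lt_mul_of_pos_left hkey2 (show (0:ℝ) < 2 * y by linarith),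
    mul_le_mul_of_nonneg_right h2y (show (0:ℝ) ≤ y ^ 2 - 1 by nlinarith)]

set_option maxHeartbeats 1000000 in
lemma Gf_pos (hQ : 3 ≤ Q) {s : ℝ} (hs1 : 1 / Q < s) (hs2 : s < 1) (hs3 : s ≠ 1 - 1 / Q) :
    0 < Gf Q s := by
  have hQ0 := hQ0 hQ
  have hQ1 := hQ1 hQ
  have hQ2 := hQ2 hQ
  have hL := hL hQ
  have hbb := bb_pos hQ
  have hQpos : 0 < 1 / Q := by positivity
  have hQhalf : 1 / Q < 1 / 2 := by
    rw [div_lt_div_iff₀ hQ0 (by norm_num : (0:ℝ) < 2)]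
    linarith
  obtain ⟨c, hc⟩ : ∃ c : ℝ, c = bb Q * Q / (Q - 1) := ⟨_, rfl⟩
  have hceq : c = 2 * Q * Real.log (Q - 1) / (Q - 2) := by
    rw [hc]; unfold bb; field_simp
  have hc4 : 4 < c := by
    rw [hceq, lt_div_iff₀ hQ2]
    nlinarith [ineq1 hQ]
  have hcQ : c * ((Q - 1) / Q ^ 2) < 1 := by
    rw [hceq]
    rw [div_mul_div_comm, div_lt_one (by positivity)]
    nlinarith [ineq2 hQ]
  have hc0 : (0:ℝ) < c := by linarith
  obtain ⟨D, hD⟩ : ∃ D : ℝ, D = Real.sqrt (1 - 4 / c) := ⟨_, rfl⟩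
  have h4c : 0 < 1 - 4 / c := by
    rw [sub_pos, div_lt_one hc0]; exact hc4
  have h4c1 : 1 - 4 / c < 1 := by
    have : 0 < 4 / c := by positivity
    linarith
  have hD0 : 0 < D := by rw [hD]; exact Real.sqrt_pos.mpr h4c
  have hD1 : D < 1 := by
    have h := Real.sqrt_lt_sqrt (le_of_lt h4c) h4c1
    rw [Real.sqrt_one] at h
    rw [hD]; exact h
  have hDsq : D ^ 2 = 1 - 4 / c := by rw [hD]; exact Real.sq_sqrt (le_of_lt h4c)
  obtain ⟨r₁, hr₁⟩ : ∃ r : ℝ, r = (1 - D) / 2 := ⟨_, rfl⟩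
  obtain ⟨r₂, hr₂⟩ : ∃ r : ℝ, r = (1 + D) / 2 := ⟨_, rfl⟩
  have hsum : r₁ + r₂ = 1 := by rw [hr₁, hr₂]; ring
  have hprod : r₁ * r₂ = 1 / c := by
    have e : r₁ * r₂ = (1 - D ^ 2) / 4 := by rw [hr₁, hr₂]; ring
    rw [e, hDsq]
    field_simp
    ring
  have hr10 : 0 < r₁ := by rw [hr₁]; linarith
  have hr1h : r₁ < 1 / 2 := by rw [hr₁]; linarith
  have hr2h : 1 / 2 < r₂ := by rw [hr₂]; linarith
  have hr21 : r₂ < 1 := by rw [hr₂]; linarith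
  have hr12 : r₁ < r₂ := by linarith
  clear hD hr₁ hr₂ hDsq h4c h4c1 hD0 hD1
  -- position of 1/Q and 1 - 1/Q relative to r₁, r₂
  have hkey : 1 / c - (Q - 1) / Q ^ 2 > 0 := by
    have h2 : 1 / c - (Q - 1) / Q ^ 2 = (1 - c * ((Q - 1) / Q ^ 2)) / c := by
      field_simp
    rw [h2]
    exact div_pos (by linarith) hc0
  have hQQ : (1 / Q - r₁) * (1 / Q - r₂) > 0 := by
    have e : (1 / Q - r₁) * (1 / Q - r₂) = (1/Q)^2 - (r₁ + r₂) * (1/Q) + r₁ * r₂ := by ring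
    rw [e, hsum, hprod]
    have e2 : (1/Q)^2 - 1 * (1/Q) + 1/c = 1/c - (Q-1)/Q^2 := by
      field_simp
      ring
    rw [e2]
    exact hkey
  have hSS : (1 - 1 / Q - r₁) * (1 - 1 / Q - r₂) > 0 := by
    have e : (1 - 1/Q - r₁) * (1 - 1/Q - r₂) = (1-1/Q)^2 - (r₁ + r₂) * (1-1/Q) + r₁ * r₂ := by
      ring
    rw [e, hsum, hprod]
    have e2 : (1-1/Q)^2 - 1 * (1-1/Q) + 1/c = 1/c - (Q-1)/Q^2 := by
      field_simp
      ring
    rw [e2]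
    exact hkey
  have hur1 : 1 / Q < r₁ := by
    by_contra h
    push_neg at h
    have h1 : 1 / Q - r₁ ≥ 0 := by linarith
    have h2 : 1 / Q - r₂ < 0 := by linarith
    nlinarith
  have hr2s : r₂ < 1 - 1 / Q := by
    have hsh : 1 / 2 < 1 - 1 / Q := by linarith
    by_contra h
    push_neg at h
    have h1 : 1 - 1 / Q - r₂ ≤ 0 := by linarith
    have h2 : 1 - 1 / Q - r₁ > 0 := by linarith
    nlinarith
  -- derivative formula for gf
  have hdgf : ∀ t : ℝ, 0 < t → t < 1 → dgf Q t = c * (t - r₁) * (t - r₂) / (t * (1 - t)) := by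
    intro t h0 h1
    have h1t : (1:ℝ) - t ≠ 0 := by linarith
    have e : c * (t - r₁) * (t - r₂) = c * (t^2 - (r₁ + r₂) * t + r₁ * r₂) := by ring
    rw [e, hsum, hprod]
    unfold dgf
    rw [hc]
    field_simp
    ring
  have hs0 : 0 < s := lt_trans hQpos hs1
  have hGf_deriv : ∀ t : ℝ, 0 < t → t < 1 → deriv (Gf Q) t = gf Q t :=
    fun t h0 h1 => (hasDerivAt_Gf hQ h0 h1).deriv
  have hgf_deriv : ∀ t : ℝ, 0 < t → t < 1 → deriv (gf Q) t = dgf Q t :=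
    fun t h0 h1 => (hasDerivAt_gf hQ h0 h1).deriv
  have hGfc : ∀ (I : Set ℝ), I ⊆ Set.Ioo 0 1 → ContinuousOn (Gf Q) I := by
    intro I hI t ht
    exact ((hasDerivAt_Gf hQ (hI ht).1 (hI ht).2).continuousAt).continuousWithinAt
  have hgfc : ∀ (I : Set ℝ), I ⊆ Set.Ioo 0 1 → ContinuousOn (gf Q) I := by
    intro I hI t ht
    exact ((hasDerivAt_gf hQ (hI ht).1 (hI ht).2).continuousAt).continuousWithinAt
  have hsub1 : Set.Icc (1/Q) r₁ ⊆ Set.Ioo 0 1 := fun t ht =>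
    ⟨lt_of_lt_of_le hQpos ht.1, by have := ht.2; linarith⟩
  -- gf > 0 on (1/Q, r₁]
  have hgf_mono1 : StrictMonoOn (gf Q) (Set.Icc (1/Q) r₁) := by
    apply strictMonoOn_of_deriv_pos (convex_Icc _ _) (hgfc _ hsub1)
    intro t ht
    rw [interior_Icc] at ht
    have h0 : 0 < t := lt_trans hQpos ht.1
    have h1 : t < 1 := by have := ht.2; linarith
    rw [hgf_deriv t h0 h1, hdgf t h0 h1]
    apply div_pos
    · have h1' : t - r₁ < 0 := by linarith [ht.2]
      have h2' : t - r₂ < 0 := by linarith [ht.2]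
      nlinarith [mul_pos hc0 (mul_pos_of_neg_of_neg h1' h2')]
    · exact mul_pos h0 (by linarith)
  have hgf_pos1 : ∀ t ∈ Set.Ioc (1/Q) r₁, 0 < gf Q t := by
    intro t ht
    have := hgf_mono1 (Set.left_mem_Icc.mpr (le_of_lt hur1)) ⟨le_of_lt ht.1, ht.2⟩ ht.1
    rwa [gf_at_unif hQ] at this
  have hGf_mono1 : StrictMonoOn (Gf Q) (Set.Icc (1/Q) r₁) := by
    apply strictMonoOn_of_deriv_pos (convex_Icc _ _) (hGfc _ hsub1)
    intro t ht
    rw [interior_Icc] at ht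
    have h0 : 0 < t := lt_trans hQpos ht.1
    have h1 : t < 1 := by have := ht.2; linarith
    rw [hGf_deriv t h0 h1]
    exact hgf_pos1 t ⟨ht.1, le_of_lt ht.2⟩
  have hGf_pos1 : ∀ t ∈ Set.Ioc (1/Q) r₁, 0 < Gf Q t := by
    intro t ht
    have := hGf_mono1 (Set.left_mem_Icc.mpr (le_of_lt hur1)) ⟨le_of_lt ht.1, ht.2⟩ ht.1
    rwa [Gf_at_unif hQ] at this
  -- gf < 0 on [r₂, s_*)
  have hsub2 : Set.Icc r₂ (1 - 1/Q) ⊆ Set.Ioo 0 1 := fun t ht =>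
    ⟨by have := ht.1; linarith, by have := ht.2; linarith⟩
  have hgf_mono2 : StrictMonoOn (gf Q) (Set.Icc r₂ (1 - 1/Q)) := by
    apply strictMonoOn_of_deriv_pos (convex_Icc _ _) (hgfc _ hsub2)
    intro t ht
    rw [interior_Icc] at ht
    have h0 : 0 < t := by have := ht.1; linarith
    have h1 : t < 1 := by have := ht.2; linarith
    rw [hgf_deriv t h0 h1, hdgf t h0 h1]
    apply div_pos
    · have h1' : 0 < t - r₁ := by linarith [ht.1]
      have h2' : 0 < t - r₂ := by linarith [ht.1]
      nlinarith [mul_pos hc0 (mul_pos h1' h2')]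
    · exact mul_pos h0 (by linarith)
  have hgf_neg2 : ∀ t ∈ Set.Ico r₂ (1 - 1/Q), gf Q t < 0 := by
    intro t ht
    have := hgf_mono2 ⟨ht.1, le_of_lt ht.2⟩ (Set.right_mem_Icc.mpr (by linarith)) ht.2
    rwa [gf_at_star hQ] at this
  have hGf_anti2 : StrictAntiOn (Gf Q) (Set.Icc r₂ (1 - 1/Q)) := by
    apply strictAntiOn_of_deriv_neg (convex_Icc _ _) (hGfc _ hsub2)
    intro t ht
    rw [interior_Icc] at ht
    have h0 : 0 < t := by have := ht.1; linarith
    have h1 : t < 1 := by have := ht.2; linarith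
    rw [hGf_deriv t h0 h1]
    exact hgf_neg2 t ⟨le_of_lt ht.1, ht.2⟩
  have hGf_pos2 : ∀ t ∈ Set.Ico r₂ (1 - 1/Q), 0 < Gf Q t := by
    intro t ht
    have := hGf_anti2 ⟨ht.1, le_of_lt ht.2⟩ (Set.right_mem_Icc.mpr (by linarith)) ht.2
    rwa [Gf_at_star hQ] at this
  -- gf > 0 on (s_*, 1)
  have hsub3 : Set.Ico (1 - 1/Q) 1 ⊆ Set.Ioo 0 1 := fun t ht =>
    ⟨by have := ht.1; linarith, ht.2⟩
  have hgf_mono3 : StrictMonoOn (gf Q) (Set.Ico (1 - 1/Q) 1) := by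
    apply strictMonoOn_of_deriv_pos (convex_Ico _ _) (hgfc _ hsub3)
    intro t ht
    rw [interior_Ico] at ht
    have h0 : 0 < t := by have := ht.1; linarith
    have h1 : t < 1 := ht.2
    rw [hgf_deriv t h0 h1, hdgf t h0 h1]
    apply div_pos
    · have h1' : 0 < t - r₁ := by linarith [ht.1]
      have h2' : 0 < t - r₂ := by linarith [ht.1]
      nlinarith [mul_pos hc0 (mul_pos h1' h2')]
    · exact mul_pos h0 (by linarith)
  have hgf_pos3 : ∀ t ∈ Set.Ioo (1 - 1/Q) 1, 0 < gf Q t := by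
    intro t ht
    have := hgf_mono3 (Set.mem_Ico.mpr ⟨le_refl _, by linarith⟩)
      (Set.mem_Ico.mpr ⟨le_of_lt ht.1, ht.2⟩) ht.1
    rwa [gf_at_star hQ] at this
  have hGf_mono3 : StrictMonoOn (Gf Q) (Set.Ico (1 - 1/Q) 1) := by
    apply strictMonoOn_of_deriv_pos (convex_Ico _ _) (hGfc _ hsub3)
    intro t ht
    rw [interior_Ico] at ht
    have h0 : 0 < t := by have := ht.1; linarith
    rw [hGf_deriv t h0 ht.2]
    exact hgf_pos3 t ht
  have hGf_pos3 : ∀ t ∈ Set.Ioo (1 - 1/Q) 1, 0 < Gf Q t := by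
    intro t ht
    have := hGf_mono3 (Set.mem_Ico.mpr ⟨le_refl _, by linarith⟩)
      (Set.mem_Ico.mpr ⟨le_of_lt ht.1, ht.2⟩) ht.1
    rwa [Gf_at_star hQ] at this
  -- middle: Gf concave on [r₁, r₂]
  have hsubm : Set.Icc r₁ r₂ ⊆ Set.Ioo 0 1 := fun t ht => ⟨lt_of_lt_of_le hr10 ht.1,
    lt_of_le_of_lt ht.2 hr21⟩
  have hgf_anti : AntitoneOn (gf Q) (Set.Icc r₁ r₂) := by
    apply antitoneOn_of_deriv_nonpos (convex_Icc _ _) (hgfc _ hsubm)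
    · intro t ht
      rw [interior_Icc] at ht
      have h0 : 0 < t := lt_trans hr10 ht.1
      have h1 : t < 1 := lt_trans ht.2 hr21
      exact (hasDerivAt_gf hQ h0 h1).differentiableAt.differentiableWithinAt
    · intro t ht
      rw [interior_Icc] at ht
      have h0 : 0 < t := lt_trans hr10 ht.1
      have h1 : t < 1 := lt_trans ht.2 hr21
      rw [hgf_deriv t h0 h1, hdgf t h0 h1]
      apply div_nonpos_of_nonpos_of_nonneg
      · have h1' : 0 < t - r₁ := by linarith [ht.1]
        have h2' : t - r₂ < 0 := by linarith [ht.2]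
        exact le_of_lt (mul_neg_of_pos_of_neg (mul_pos hc0 h1') h2')
      · exact le_of_lt (mul_pos h0 (by linarith))
  have hGf_concave : ConcaveOn ℝ (Set.Icc r₁ r₂) (Gf Q) := by
    apply AntitoneOn.concaveOn_of_deriv (convex_Icc _ _) (hGfc _ hsubm)
    · intro t ht
      rw [interior_Icc] at ht
      have h0 : 0 < t := lt_trans hr10 ht.1
      have h1 : t < 1 := lt_trans ht.2 hr21
      exact (hasDerivAt_Gf hQ h0 h1).differentiableAt.differentiableWithinAt
    · intro a ha b hb hab
      rw [interior_Icc] at ha hb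
      have ha0 : 0 < a := lt_trans hr10 ha.1
      have ha1 : a < 1 := lt_trans ha.2 hr21
      have hb0 : 0 < b := lt_trans hr10 hb.1
      have hb1 : b < 1 := lt_trans hb.2 hr21
      rw [hGf_deriv a ha0 ha1, hGf_deriv b hb0 hb1]
      exact hgf_anti ⟨le_of_lt ha.1, le_of_lt ha.2⟩ ⟨le_of_lt hb.1, le_of_lt hb.2⟩ hab
  have hGfr1 : 0 < Gf Q r₁ := hGf_pos1 r₁ ⟨hur1, le_refl _⟩
  have hGfr2 : 0 < Gf Q r₂ := hGf_pos2 r₂ ⟨le_refl _, hr2s⟩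
  have hGf_posm : ∀ t ∈ Set.Icc r₁ r₂, 0 < Gf Q t := by
    intro t ht
    have hseg : t ∈ segment ℝ r₁ r₂ := by
      rw [segment_eq_Icc (le_of_lt hr12)]
      exact ht
    have := hGf_concave.ge_on_segment (Set.left_mem_Icc.mpr (le_of_lt hr12))
      (Set.right_mem_Icc.mpr (le_of_lt hr12)) hseg
    have hmin : 0 < min (Gf Q r₁) (Gf Q r₂) := lt_min hGfr1 hGfr2
    linarith
  -- conclude by cases
  rcases le_or_gt s r₁ with h | h
  · exact hGf_pos1 s ⟨hs1, h⟩
  rcases le_or_gt s r₂ with h' | h'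
  · exact hGf_posm s ⟨le_of_lt h, h'⟩
  rcases lt_trichotomy s (1 - 1/Q) with h'' | h'' | h''
  · exact hGf_pos2 s ⟨le_of_lt h', h''⟩
  · exact absurd h'' hs3
  · exact hGf_pos3 s ⟨h'', hs2⟩

lemma Gf_nonneg (hQ : 3 ≤ Q) {s : ℝ} (hs1 : 1 / Q ≤ s) (hs2 : s < 1) : 0 ≤ Gf Q s := by
  rcases eq_or_lt_of_le hs1 with h | h
  · rw [← h, Gf_at_unif hQ]
  rcases eq_or_ne s (1 - 1/Q) with h' | h'
  · rw [h', Gf_at_star hQ]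
  exact le_of_lt (Gf_pos hQ h hs2 h')


variable {q : ℕ} [NeZero q]

lemma betaC_eq_bb (q : ℕ) : betaC q = bb q := rfl

/-- generic per-coordinate sum decomposition after a two-coordinate update -/
lemma sum_update_pair (f : ℝ → ℝ) (x : Fin q → ℝ) {i j : Fin q} (hij : i ≠ j) (u v : ℝ) :
    ∑ k, f (Function.update (Function.update x i u) j v k)
      = (∑ k, f (x k)) - f (x i) - f (x j) + f u + f v := by
  have key : ∀ (g : Fin q → ℝ) (a : Fin q) (w : ℝ),
      ∑ k, f (Function.update g a w k) = (∑ k, f (g k)) - f (g a) + f w := by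
    intro g a w
    have h2 : (fun k => f (Function.update g a w k))
        = Function.update (fun k => f (g k)) a (f w) := by
      funext k
      by_cases h : k = a <;> simp [Function.update, h]
    calc ∑ k, f (Function.update g a w k)
        = ∑ k, Function.update (fun k => f (g k)) a (f w) k := by rw [h2]
      _ = f w + ∑ k ∈ univ \ {a}, f (g k) :=
          Finset.sum_update_of_mem (mem_univ a) (fun k => f (g k)) (f w)
      _ = f w + ((∑ k, f (g k)) - f (g a)) := by
          rw [Finset.sdiff_singleton_eq_erase,
            ← Finset.add_sum_erase univ (fun k => f (g k)) (mem_univ a)]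
          ring
      _ = (∑ k, f (g k)) - f (g a) + f w := by ring
  rw [key, key]
  rw [Function.update_of_ne (Ne.symm hij)]
  ring

lemma fFE_update_pair (β : ℝ) (x : Fin q → ℝ) {i j : Fin q} (hij : i ≠ j) (u v : ℝ) :
    fFE q β 0 (Function.update (Function.update x i u) j v)
      = fFE q β 0 x
        + (u * Real.log (q * u) + v * Real.log (q * v)
            - x i * Real.log (q * x i) - x j * Real.log (q * x j))
        - β / 2 * (u ^ 2 + v ^ 2 - x i ^ 2 - x j ^ 2) := by
  unfold fFE
  rw [sum_update_pair (fun t => t * Real.log (q * t)) x hij u v,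
    sum_update_pair (fun t => t ^ 2) x hij u v]
  ring

lemma simplex_update_pair {x : Fin q → ℝ} (hx : x ∈ simplexH q) {i j : Fin q} (hij : i ≠ j)
    {t : ℝ} (ht1 : -(x i) ≤ t) (ht2 : t ≤ x j) :
    Function.update (Function.update x i (x i + t)) j (x j - t) ∈ simplexH q := by
  constructor
  · rw [sum_update_pair (fun t => t) x hij (x i + t) (x j - t)]
    have := hx.1
    rw [this]
    ring
  · intro k
    rcases eq_or_ne k j with h | h
    · rw [h, Function.update_self]
      linarith
    rw [Function.update_of_ne h]
    rcases eq_or_ne k i with h' | h'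
    · rw [h', Function.update_self]
      have := hx.2 i
      linarith
    · rw [Function.update_of_ne h']
      exact hx.2 k

def unifP (q : ℕ) : Fin q → ℝ := fun _ => 1 / (q : ℝ)

lemma q_pos (hq : 3 ≤ q) : (0:ℝ) < q := by
  have : (3:ℝ) ≤ q := by exact_mod_cast hq
  linarith

lemma unif_mem (hq : 3 ≤ q) : unifP q ∈ simplexH q := by
  have hq0 : (0:ℝ) < q := q_pos hq
  constructor
  · simp only [unifP, Finset.sum_const, card_univ, Fintype.card_fin, nsmul_eq_mul]
    field_simp
  · intro i
    unfold unifP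
    positivity

lemma simplex_compact : IsCompact (simplexH q) := by
  apply IsCompact.of_isClosed_subset (isCompact_Icc (a := (0 : Fin q → ℝ)) (b := 1))
  · have h1 : IsClosed {x : Fin q → ℝ | ∑ i, x i = 1} :=
      isClosed_eq (continuous_finset_sum _ fun i _ => continuous_apply i) continuous_const
    have h2 : IsClosed {x : Fin q → ℝ | ∀ i, 0 ≤ x i} := by
      have : {x : Fin q → ℝ | ∀ i, 0 ≤ x i} = ⋂ i, {x : Fin q → ℝ | 0 ≤ x i} := by
        ext x; simp
      rw [this]
      exact isClosed_iInter fun i => isClosed_le continuous_const (continuous_apply i)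
    exact h1.inter h2
  · intro x hx
    constructor
    · intro i; exact hx.2 i
    · intro i
      have : x i ≤ ∑ k, x k := Finset.single_le_sum (fun k _ => hx.2 k) (mem_univ i)
      rw [hx.1] at this
      exact le_trans this (by norm_num)

lemma fFE_continuous (hq : 3 ≤ q) (β : ℝ) : Continuous (fFE q β 0) := by
  have hq0 : (q:ℝ) ≠ 0 := ne_of_gt (q_pos hq)
  unfold fFE
  apply Continuous.sub
  apply Continuous.sub
  · apply continuous_finset_sum
    intro i _
    have he : (fun x : Fin q → ℝ => x i * Real.log (q * x i))
        = fun x => ((q * x i) * Real.log (q * x i)) / q := by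
      funext x
      field_simp
    rw [he]
    exact (Real.continuous_mul_log.comp (continuous_const.mul (continuous_apply i))).div_const _
  · apply Continuous.mul continuous_const
    apply continuous_finset_sum
    intro i _
    exact (continuous_apply i).pow 2
  · exact continuous_const.mul (continuous_apply 0)

lemma exists_min (hq : 3 ≤ q) (β : ℝ) : ∃ x, x ∈ minSetF q β 0 := by
  obtain ⟨x, hx, hmin⟩ := simplex_compact.exists_isMinOn ⟨unifP q, unif_mem hq⟩
    ((fFE_continuous hq β).continuousOn)
  exact ⟨x, hx, fun y hy => hmin hy⟩

lemma phi_zero : (0:ℝ) * Real.log ((q:ℝ) * 0) = 0 := by simp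

lemma coord_le_one {x : Fin q → ℝ} (hx : x ∈ simplexH q) (i : Fin q) : x i ≤ 1 := by
  have : x i ≤ ∑ k, x k := Finset.single_le_sum (fun k _ => hx.2 k) (mem_univ i)
  rw [hx.1] at this
  exact this

lemma phi_secant (hq : 3 ≤ q) {a t : ℝ} (ha : 0 < a) (ht0 : 0 ≤ t) (hta : t ≤ a) :
    (a - t) * Real.log ((q:ℝ) * (a - t)) - a * Real.log ((q:ℝ) * a)
      ≤ (t / a) * |a * Real.log ((q:ℝ) * a)| := by
  have hq0 : (0:ℝ) < q := q_pos hq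
  have hcv := Real.convexOn_mul_log
  have hmem0 : (0:ℝ) ∈ Set.Ici (0:ℝ) := Set.mem_Ici.mpr (le_refl 0)
  have hmemqa : (q:ℝ) * a ∈ Set.Ici (0:ℝ) := Set.mem_Ici.mpr (by positivity)
  have hw1 : 0 ≤ t / a := by positivity
  have hw2 : 0 ≤ 1 - t / a := by
    rw [sub_nonneg, div_le_one ha]
    exact hta
  have hsum : t / a + (1 - t / a) = 1 := by ring
  have h := hcv.2 hmem0 hmemqa hw1 hw2 hsum
  simp only [smul_eq_mul, mul_zero, Real.log_zero, zero_add, add_zero] at h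
  have harg : (1 - t / a) * ((q:ℝ) * a) = (q:ℝ) * (a - t) := by
    field_simp
  rw [harg] at h
  -- h : (q(a-t)) * log (q(a-t)) ≤ (1 - t/a) * ((q a) * log (q a))
  have h2 : (a - t) * Real.log ((q:ℝ) * (a - t))
      ≤ (1 - t / a) * (a * Real.log ((q:ℝ) * a)) := by
    have h3 : (q:ℝ) * ((a - t) * Real.log ((q:ℝ) * (a - t)))
        ≤ (q:ℝ) * ((1 - t / a) * (a * Real.log ((q:ℝ) * a))) := by
      calc (q:ℝ) * ((a - t) * Real.log ((q:ℝ) * (a - t)))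
          = ((q:ℝ) * (a - t)) * Real.log ((q:ℝ) * (a - t)) := by ring
        _ ≤ (1 - t / a) * (((q:ℝ) * a) * Real.log ((q:ℝ) * a)) := h
        _ = (q:ℝ) * ((1 - t / a) * (a * Real.log ((q:ℝ) * a))) := by ring
    exact le_of_mul_le_mul_left h3 hq0
  have h4 : (t / a) * -(a * Real.log ((q:ℝ) * a)) ≤ (t / a) * |a * Real.log ((q:ℝ) * a)| :=
    mul_le_mul_of_nonneg_left (neg_le_abs _) hw1
  nlinarith [h2, h4]

lemma min_pos (hq : 3 ≤ q) {β : ℝ} (hβ : 0 ≤ β) {x : Fin q → ℝ}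
    (hx : x ∈ minSetF q β 0) (i : Fin q) : 0 < x i := by
  have hq0 : (0:ℝ) < q := q_pos hq
  obtain ⟨hxs, hmin⟩ := hx
  rcases lt_or_ge 0 (x i) with h | h
  · exact h
  have hxi : x i = 0 := le_antisymm h (hxs.2 i)
  exfalso
  -- find a positive coordinate j
  have hj : ∃ j, 0 < x j := by
    by_contra hcon
    push_neg at hcon
    have : ∀ j, x j = 0 := fun j => le_antisymm (hcon j) (hxs.2 j)
    have hsum := hxs.1
    rw [Finset.sum_congr rfl (fun k _ => this k)] at hsum
    simp at hsum
  obtain ⟨j, hj⟩ := hj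
  have hij : i ≠ j := by
    intro h'
    rw [h'] at hxi
    rw [hxi] at hj
    exact lt_irrefl 0 hj
  set a : ℝ := x j with ha
  have ha1 : a ≤ 1 := coord_le_one hxs j
  set C : ℝ := |a * Real.log ((q:ℝ) * a)| / a with hC
  have hC0 : 0 ≤ C := by positivity
  set t : ℝ := min a (Real.exp (-(C + β + 1)) / q) with ht
  have ht0 : 0 < t := lt_min hj (by positivity)
  have hta : t ≤ a := min_le_left _ _
  -- the competitor point
  set y := Function.update (Function.update x i (x i + t)) j (x j - t) with hy
  have hymem : y ∈ simplexH q := simplex_update_pair hxs hij (by linarith) hta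
  have hfy := fFE_update_pair (q := q) β x hij (x i + t) (x j - t)
  rw [← hy] at hfy
  -- bound each piece
  have hu : x i + t = t := by rw [hxi]; ring
  rw [hu, hxi] at hfy
  have hlog_t : t * Real.log ((q:ℝ) * t) ≤ -(C + β + 1) * t := by
    have h1 : (q:ℝ) * t ≤ Real.exp (-(C + β + 1)) := by
      have : t ≤ Real.exp (-(C + β + 1)) / q := min_le_right _ _
      rw [le_div_iff₀ hq0] at this
      linarith [this]
    have h2 : Real.log ((q:ℝ) * t) ≤ -(C + β + 1) := by
      have := Real.log_le_log (by positivity) h1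
      rwa [Real.log_exp] at this
    calc t * Real.log ((q:ℝ) * t) ≤ t * (-(C + β + 1)) :=
          mul_le_mul_of_nonneg_left h2 (le_of_lt ht0)
      _ = -(C + β + 1) * t := by ring
  have hsec : (a - t) * Real.log ((q:ℝ) * (a - t)) - a * Real.log ((q:ℝ) * a) ≤ C * t := by
    have := phi_secant hq hj (le_of_lt ht0) hta
    have he : t / a * |a * Real.log ((q:ℝ) * a)| = C * t := by
      rw [hC]
      field_simp
    rw [he] at this
    exact this
  have hquad : -(β / 2) * (t ^ 2 + (a - t) ^ 2 - 0 ^ 2 - a ^ 2) ≤ β * t := by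
    have he : -(β / 2) * (t ^ 2 + (a - t) ^ 2 - 0 ^ 2 - a ^ 2) = β * t * (a - t) := by ring
    rw [he]
    have h1 : a - t ≤ 1 := by linarith
    have h2 : 0 ≤ β * t := by positivity
    nlinarith
  have hlt : fFE q β 0 y < fFE q β 0 x := by
    rw [hfy, phi_zero]
    have : t * Real.log ((q:ℝ)*t) + (a - t) * Real.log ((q:ℝ)*(a-t)) - 0 - a * Real.log ((q:ℝ)*a)
        - β / 2 * (t ^ 2 + (a - t) ^ 2 - 0 ^ 2 - a ^ 2) ≤ -t := by
      have := add_le_add (add_le_add hlog_t hsec) hquad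
      linarith
    linarith
  exact absurd (hmin y hymem) (not_le.mpr hlt)

lemma phiE_hasDeriv (hq : 3 ≤ q) {u : ℝ} (hu : 0 < u) :
    HasDerivAt (fun v => v * Real.log ((q:ℝ) * v)) (Real.log ((q:ℝ) * u) + 1) u := by
  have hq0 : (0:ℝ) < q := q_pos hq
  have hqu : (q:ℝ) * u ≠ 0 := by positivity
  have hlog : HasDerivAt (fun v => Real.log ((q:ℝ) * v)) (1 / u) u := by
    have h := (Real.hasDerivAt_log hqu).comp u ((hasDerivAt_id u).const_mul (q:ℝ))
    refine h.congr_deriv (Eq.symm ?_)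
    field_simp
  have h := (hasDerivAt_id u).mul hlog
  refine h.congr_deriv (Eq.symm ?_)
  field_simp; simp only [id]; ring

/-- the one-parameter exchange function along coordinates i, j -/
def EE (q : ℕ) [NeZero q] (β : ℝ) (x : Fin q → ℝ) (i j : Fin q) (t : ℝ) : ℝ :=
  fFE q β 0 x
    + ((x i + t) * Real.log ((q:ℝ) * (x i + t)) + (x j - t) * Real.log ((q:ℝ) * (x j - t))
        - x i * Real.log ((q:ℝ) * x i) - x j * Real.log ((q:ℝ) * x j))
    - β / 2 * ((x i + t) ^ 2 + (x j - t) ^ 2 - x i ^ 2 - x j ^ 2)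

lemma EE_zero (β : ℝ) (x : Fin q → ℝ) (i j : Fin q) : EE q β x i j 0 = fFE q β 0 x := by
  unfold EE
  norm_num

lemma EE_eq_fFE (β : ℝ) (x : Fin q → ℝ) {i j : Fin q} (hij : i ≠ j) (t : ℝ) :
    EE q β x i j t = fFE q β 0 (Function.update (Function.update x i (x i + t)) j (x j - t)) := by
  rw [fFE_update_pair β x hij (x i + t) (x j - t)]
  unfold EE
  ring

lemma hasDerivAt_EE (hq : 3 ≤ q) (β : ℝ) (x : Fin q → ℝ) (i j : Fin q) {t : ℝ}
    (h1 : 0 < x i + t) (h2 : 0 < x j - t) :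
    HasDerivAt (EE q β x i j)
      ((Real.log ((q:ℝ) * (x i + t)) - β * (x i + t))
        - (Real.log ((q:ℝ) * (x j - t)) - β * (x j - t))) t := by
  have hA : HasDerivAt (fun t => (x i + t) * Real.log ((q:ℝ) * (x i + t)))
      (Real.log ((q:ℝ) * (x i + t)) + 1) t := by
    have h := (phiE_hasDeriv hq h1).comp t ((hasDerivAt_id t).const_add (x i))
    refine h.congr_deriv (Eq.symm ?_)
    ring
  have hsub : HasDerivAt (fun t : ℝ => x j - t) (-1) t := by
    exact ((hasDerivAt_const t (x j)).sub (hasDerivAt_id t)).congr_deriv (by ring)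
  have hB : HasDerivAt (fun t => (x j - t) * Real.log ((q:ℝ) * (x j - t)))
      (-(Real.log ((q:ℝ) * (x j - t)) + 1)) t := by
    have h := (phiE_hasDeriv hq h2).comp t hsub
    refine h.congr_deriv (Eq.symm ?_)
    ring
  have hq1 : HasDerivAt (fun t : ℝ => (x i + t) ^ 2) (2 * (x i + t)) t := by
    have h := (hasDerivAt_pow 2 (x i + t)).comp t ((hasDerivAt_id t).const_add (x i))
    refine h.congr_deriv (Eq.symm ?_)
    push_cast
    ring
  have hq2 : HasDerivAt (fun t : ℝ => (x j - t) ^ 2) (-(2 * (x j - t))) t := by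
    have h := (hasDerivAt_pow 2 (x j - t)).comp t hsub
    refine h.congr_deriv (Eq.symm ?_)
    push_cast
    ring
  have h := ((((hA.add hB).sub_const (x i * Real.log ((q:ℝ) * x i) + x j * Real.log ((q:ℝ) * x j))).const_add (fFE q β 0 x)).sub
    ((((hq1.add hq2).sub_const (x i ^ 2 + x j ^ 2)).const_mul (β / 2))))
  have heq : EE q β x i j = fun t =>
      fFE q β 0 x + ((x i + t) * Real.log ((q:ℝ) * (x i + t)) + (x j - t) * Real.log ((q:ℝ) * (x j - t))
        - (x i * Real.log ((q:ℝ) * x i) + x j * Real.log ((q:ℝ) * x j)))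
      - β / 2 * ((x i + t) ^ 2 + (x j - t) ^ 2 - (x i ^ 2 + x j ^ 2)) := by
    funext t
    unfold EE
    ring
  rw [heq]
  refine h.congr_deriv (Eq.symm ?_)
  ring

lemma lagrange (hq : 3 ≤ q) {β : ℝ} (hβ : 0 ≤ β) {x : Fin q → ℝ}
    (hx : x ∈ minSetF q β 0) {i j : Fin q} (hij : i ≠ j) :
    Real.log ((q:ℝ) * x i) - β * x i = Real.log ((q:ℝ) * x j) - β * x j := by
  have hxi := min_pos hq hβ hx i
  have hxj := min_pos hq hβ hx j
  have hloc : IsLocalMin (EE q β x i j) 0 := by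
    have hmem : Set.Ioo (-(x i)) (x j) ∈ nhds (0:ℝ) := Ioo_mem_nhds (by linarith) hxj
    rw [IsLocalMin, IsMinFilter]
    apply Filter.eventually_of_mem hmem
    intro t ht
    rw [EE_zero, EE_eq_fFE β x hij t]
    exact hx.2 _ (simplex_update_pair hx.1 hij (le_of_lt ht.1) (le_of_lt ht.2))
  have hd := hasDerivAt_EE hq β x i j (t := 0) (by linarith) (by linarith)
  have := hloc.hasDerivAt_eq_zero hd
  have e1 : x i + 0 = x i := by ring
  have e2 : x j - 0 = x j := by ring
  rw [e1, e2] at this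
  linarith [this]

lemma no_two_large (hq : 3 ≤ q) {β : ℝ} (hβ : 0 < β) {x : Fin q → ℝ}
    (hx : x ∈ minSetF q β 0) {i j : Fin q} (hij : i ≠ j)
    (heq : x i = x j) (hgt : 1 / β < x i) : False := by
  have hxi := min_pos hq (le_of_lt hβ) hx i
  have hxj := min_pos hq (le_of_lt hβ) hx j
  have hβ0 : 0 < 1 / β := by positivity
  set t₀ : ℝ := min ((x i - 1 / β) / 2) (x j / 2) with ht₀
  have ht₀0 : 0 < t₀ := lt_min (by linarith) (by linarith)
  have ht₀1 : t₀ ≤ (x i - 1 / β) / 2 := min_le_left _ _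
  have ht₀2 : t₀ ≤ x j / 2 := min_le_right _ _
  -- pb is strictly decreasing on [1/β, ∞)
  have hpb : StrictAntiOn (fun u => Real.log ((q:ℝ) * u) - β * u) (Set.Ici (1 / β)) := by
    apply strictAntiOn_of_deriv_neg (convex_Ici _)
    · intro u hu
      have hu0 : 0 < u := lt_of_lt_of_le hβ0 hu.out
      have h := (phiE_hasDeriv hq hu0)
      have hqu : (q:ℝ) * u ≠ 0 := by
        have := q_pos hq
        positivity
      have hder : HasDerivAt (fun u => Real.log ((q:ℝ) * u) - β * u) (1 / u - β) u := by
        have hlog : HasDerivAt (fun v => Real.log ((q:ℝ) * v)) (1 / u) u := by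
          have h2 := (Real.hasDerivAt_log hqu).comp u ((hasDerivAt_id u).const_mul (q:ℝ))
          refine h2.congr_deriv (Eq.symm ?_)
          field_simp
        have := hlog.sub ((hasDerivAt_id u).const_mul β)
        refine this.congr_deriv (Eq.symm ?_)
        ring
      exact hder.continuousAt.continuousWithinAt
    · intro u hu
      rw [interior_Ici] at hu
      have hu1 : 1 / β < u := hu
      have hu0 : 0 < u := lt_trans hβ0 hu1
      have hqu : (q:ℝ) * u ≠ 0 := by
        have := q_pos hq
        positivity
      have hder : HasDerivAt (fun u => Real.log ((q:ℝ) * u) - β * u) (1 / u - β) u := by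
        have hlog : HasDerivAt (fun v => Real.log ((q:ℝ) * v)) (1 / u) u := by
          have h2 := (Real.hasDerivAt_log hqu).comp u ((hasDerivAt_id u).const_mul (q:ℝ))
          refine h2.congr_deriv (Eq.symm ?_)
          field_simp
        have := hlog.sub ((hasDerivAt_id u).const_mul β)
        refine this.congr_deriv (Eq.symm ?_)
        ring
      rw [hder.deriv]
      rw [sub_neg, div_lt_iff₀ hu0]
      rw [div_lt_iff₀ hβ] at hu1
      linarith
  -- EE is strictly decreasing on [0, t₀]
  have hEanti : StrictAntiOn (EE q β x i j) (Set.Icc 0 t₀) := by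
    apply strictAntiOn_of_deriv_neg (convex_Icc _ _)
    · intro t ht
      have h1 : 0 < x i + t := by have := ht.1; linarith
      have h2 : 0 < x j - t := by have := ht.2; linarith
      exact (hasDerivAt_EE hq β x i j h1 h2).continuousAt.continuousWithinAt
    · intro t ht
      rw [interior_Icc] at ht
      have h1 : 0 < x i + t := by have := ht.1; linarith
      have h2 : 0 < x j - t := by have := ht.2; linarith
      rw [(hasDerivAt_EE hq β x i j h1 h2).deriv]
      have hm1 : x j - t ∈ Set.Ici (1 / β) := by
        rw [Set.mem_Ici, ← heq]
        have := ht.2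
        linarith
      have hm2 : x i + t ∈ Set.Ici (1 / β) := by
        rw [Set.mem_Ici]
        have := ht.1
        linarith
      have hlt : x j - t < x i + t := by
        rw [← heq]
        have := ht.1
        linarith
      have := hpb hm1 hm2 hlt
      simp only at this
      linarith
  have hdec : EE q β x i j t₀ < EE q β x i j 0 :=
    hEanti (Set.left_mem_Icc.mpr (le_of_lt ht₀0)) (Set.right_mem_Icc.mpr (le_of_lt ht₀0)) ht₀0
  rw [EE_zero, EE_eq_fFE β x hij t₀] at hdec
  exact absurd (hx.2 _ (simplex_update_pair hx.1 hij (by linarith) (by linarith))) (not_le.mpr hdec)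

lemma pb_mono (hq : 3 ≤ q) {β : ℝ} (hβ : 0 < β) :
    StrictMonoOn (fun u => Real.log ((q:ℝ) * u) - β * u) (Set.Ioc 0 (1 / β)) := by
  have hβ0 : 0 < 1 / β := by positivity
  apply strictMonoOn_of_deriv_pos (convex_Ioc _ _)
  · intro u hu
    have hu0 : 0 < u := hu.1
    have hqu : (q:ℝ) * u ≠ 0 := by
      have := q_pos hq
      positivity
    have hlog : HasDerivAt (fun v => Real.log ((q:ℝ) * v)) (1 / u) u := by
      have h2 := (Real.hasDerivAt_log hqu).comp u ((hasDerivAt_id u).const_mul (q:ℝ))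
      refine h2.congr_deriv (Eq.symm ?_)
      field_simp
    have hder := hlog.sub ((hasDerivAt_id u).const_mul β)
    have hder2 : HasDerivAt (fun u => Real.log ((q:ℝ) * u) - β * u) (1 / u - β) u := by
      refine hder.congr_deriv (Eq.symm ?_)
      ring
    exact hder2.continuousAt.continuousWithinAt
  · intro u hu
    rw [interior_Ioc] at hu
    have hu0 : 0 < u := hu.1
    have hu1 : u < 1 / β := hu.2
    have hqu : (q:ℝ) * u ≠ 0 := by
      have := q_pos hq
      positivity
    have hlog : HasDerivAt (fun v => Real.log ((q:ℝ) * v)) (1 / u) u := by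
      have h2 := (Real.hasDerivAt_log hqu).comp u ((hasDerivAt_id u).const_mul (q:ℝ))
      refine h2.congr_deriv (Eq.symm ?_)
      field_simp
    have hder := hlog.sub ((hasDerivAt_id u).const_mul β)
    have hder2 : HasDerivAt (fun u => Real.log ((q:ℝ) * u) - β * u) (1 / u - β) u := by
      refine hder.congr_deriv (Eq.symm ?_)
      ring
    rw [hder2.deriv, sub_pos, lt_div_iff₀ hu0]
    rw [lt_div_iff₀ hβ] at hu1
    linarith

lemma classify (hq : 3 ≤ q) {β : ℝ} (hβ : 0 < β) {x : Fin q → ℝ}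
    (hx : x ∈ minSetF q β 0) :
    (∀ i, x i = 1 / (q:ℝ)) ∨
      ∃ (j : Fin q) (s : ℝ), 1 / (q:ℝ) < s ∧ s < 1 ∧
        x j = s ∧ ∀ i, i ≠ j → x i = (1 - s) / ((q:ℝ) - 1) := by
  have hq0 : (0:ℝ) < q := q_pos hq
  have hQ1 : (1:ℝ) < q := by linarith [show (3:ℝ) ≤ q from by exact_mod_cast hq]
  have hpos : ∀ i, 0 < x i := min_pos hq (le_of_lt hβ) hx
  have hβ0 : 0 < 1 / β := by positivity
  have hlag : ∀ i j : Fin q, Real.log ((q:ℝ) * x i) - β * x i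
      = Real.log ((q:ℝ) * x j) - β * x j := by
    intro i j
    rcases eq_or_ne i j with h | h
    · rw [h]
    · exact lagrange hq (le_of_lt hβ) hx h
  have hmono := pb_mono hq hβ (q := q)
  have hinj := hmono.injOn
  by_cases hall : ∀ i, x i ≤ 1 / β
  · -- all coordinates equal, hence uniform
    left
    have heq : ∀ i j : Fin q, x i = x j := by
      intro i j
      exact hinj ⟨hpos i, hall i⟩ ⟨hpos j, hall j⟩ (hlag i j)
    intro i
    have hsum := hx.1.1
    have h1 : ∑ k, x k = (q:ℝ) * x i := by
      rw [Finset.sum_congr rfl (fun k _ => heq k i)]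
      simp [Finset.sum_const, card_univ, mul_comm]
    rw [h1] at hsum
    field_simp
    linarith
  · push_neg at hall
    obtain ⟨j, hj⟩ := hall
    right
    -- all other coordinates are ≤ 1/β
    have hsmall : ∀ i, i ≠ j → x i ≤ 1 / β := by
      intro i hij
      by_contra hcon
      push_neg at hcon
      -- both x i and x j exceed 1/β, so by strict antitonicity they are equal
      have hanti : StrictAntiOn (fun u => Real.log ((q:ℝ) * u) - β * u) (Set.Ici (1 / β)) := by
        apply strictAntiOn_of_deriv_neg (convex_Ici _)
        · intro u hu
          have hu0 : 0 < u := lt_of_lt_of_le hβ0 hu.out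
          have hqu : (q:ℝ) * u ≠ 0 := by positivity
          have hlog : HasDerivAt (fun v => Real.log ((q:ℝ) * v)) (1 / u) u := by
            have h2 := (Real.hasDerivAt_log hqu).comp u ((hasDerivAt_id u).const_mul (q:ℝ))
            refine h2.congr_deriv (Eq.symm ?_)
            field_simp
          have hder := hlog.sub ((hasDerivAt_id u).const_mul β)
          have hder2 : HasDerivAt (fun u => Real.log ((q:ℝ) * u) - β * u) (1 / u - β) u := by
            refine hder.congr_deriv (Eq.symm ?_)
            ring
          exact hder2.continuousAt.continuousWithinAt
        · intro u hu
          rw [interior_Ici] at hu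
          have hu1 : 1 / β < u := hu
          have hu0 : 0 < u := lt_trans hβ0 hu1
          have hqu : (q:ℝ) * u ≠ 0 := by positivity
          have hlog : HasDerivAt (fun v => Real.log ((q:ℝ) * v)) (1 / u) u := by
            have h2 := (Real.hasDerivAt_log hqu).comp u ((hasDerivAt_id u).const_mul (q:ℝ))
            refine h2.congr_deriv (Eq.symm ?_)
            field_simp
          have hder := hlog.sub ((hasDerivAt_id u).const_mul β)
          have hder2 : HasDerivAt (fun u => Real.log ((q:ℝ) * u) - β * u) (1 / u - β) u := by
            refine hder.congr_deriv (Eq.symm ?_)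
            ring
          rw [hder2.deriv, sub_neg, div_lt_iff₀ hu0]
          rw [div_lt_iff₀ hβ] at hu1
          linarith
      have heqij : x i = x j :=
        hanti.injOn (Set.mem_Ici.mpr (le_of_lt hcon)) (Set.mem_Ici.mpr (le_of_lt hj)) (hlag i j)
      exact no_two_large hq hβ hx hij heqij (by rw [heqij]; exact hj)
    -- pick a reference coordinate i₀ ≠ j
    have hq2 : 2 ≤ q := le_trans (by norm_num) hq
    have hlt1 : (1 : ℕ) < q := hq2
    obtain ⟨i₀, hi₀⟩ : ∃ i₀ : Fin q, i₀ ≠ j := by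
      rcases eq_or_ne (⟨0, by omega⟩ : Fin q) j with h | h
      · exact ⟨⟨1, by omega⟩, by rw [← h]; intro hc; simp [Fin.ext_iff] at hc⟩
      · exact ⟨_, h⟩
    have hb : ∀ i, i ≠ j → x i = x i₀ := by
      intro i hij
      exact hinj ⟨hpos i, hsmall i hij⟩ ⟨hpos i₀, hsmall i₀ hi₀⟩ (hlag i i₀)
    set b : ℝ := x i₀ with hbdef
    set s : ℝ := x j with hsdef
    -- sum identity
    have hsum : s + ((q:ℝ) - 1) * b = 1 := by
      have h1 := hx.1.1
      rw [← Finset.add_sum_erase univ x (mem_univ j)] at h1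
      have h2 : ∑ k ∈ univ.erase j, x k = ∑ k ∈ univ.erase j, b := by
        apply Finset.sum_congr rfl
        intro k hk
        exact hb k (Finset.mem_erase.mp hk).1
      rw [h2, Finset.sum_const, Finset.card_erase_of_mem (mem_univ j), card_univ,
        Fintype.card_fin, nsmul_eq_mul] at h1
      have hcast : ((q - 1 : ℕ) : ℝ) = (q:ℝ) - 1 := by
        rw [Nat.cast_sub (by omega : 1 ≤ q)]
        norm_num
      rw [hcast] at h1
      linarith
    have hbs : b < s := lt_of_le_of_lt (hsmall i₀ hi₀) hj
    have hs1q : 1 / (q:ℝ) < s := by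
      rw [div_lt_iff₀ hq0]
      nlinarith
    have hs1 : s < 1 := by nlinarith [hpos i₀]
    refine ⟨j, s, hs1q, hs1, rfl, ?_⟩
    intro i hij
    rw [hb i hij]
    have hq1ne : (q:ℝ) - 1 ≠ 0 := by linarith
    rw [eq_div_iff hq1ne]
    linarith [hsum]

def wP (q : ℕ) (j : Fin q) : Fin q → ℝ :=
  fun i => if i = j then ((q:ℝ) - 1) / q else 1 / ((q:ℝ) * ((q:ℝ) - 1))

lemma hQcast (hq : 3 ≤ q) : (3:ℝ) ≤ (q:ℝ) := by exact_mod_cast hq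

lemma betaC_pos (hq : 3 ≤ q) : 0 < betaC q := by
  rw [betaC_eq_bb]
  exact bb_pos (hQcast hq)

lemma sum_ite_point (hq : 3 ≤ q) (F : ℝ → ℝ) (j : Fin q) (s b : ℝ) :
    ∑ i, F (if i = j then s else b) = F s + ((q:ℝ) - 1) * F b := by
  rw [← Finset.add_sum_erase univ (fun i => F (if i = j then s else b)) (mem_univ j)]
  simp only [if_pos rfl]
  congr 1
  have h2 : ∑ k ∈ univ.erase j, F (if k = j then s else b) = ∑ k ∈ univ.erase j, F b := by
    apply Finset.sum_congr rfl
    intro k hk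
    rw [if_neg (Finset.mem_erase.mp hk).1]
  rw [h2, Finset.sum_const, Finset.card_erase_of_mem (mem_univ j), card_univ, Fintype.card_fin,
    nsmul_eq_mul]
  congr 1
  rw [Nat.cast_sub (by omega : 1 ≤ q)]
  norm_num

lemma fFE_two_value (hq : 3 ≤ q) (s : ℝ) (j : Fin q) :
    fFE q (betaC q) 0 (fun i => if i = j then s else (1 - s) / ((q:ℝ) - 1))
      = Gf (q:ℝ) s - betaC q / (2 * q) := by
  have hq0 : (0:ℝ) < q := q_pos hq
  have hq1 : (0:ℝ) < (q:ℝ) - 1 := by linarith [hQcast hq]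
  unfold fFE
  rw [sum_ite_point hq (fun t => t * Real.log ((q:ℝ) * t)) j s ((1 - s)/((q:ℝ)-1)),
    sum_ite_point hq (fun t => t ^ 2) j s ((1 - s)/((q:ℝ)-1))]
  simp only
  rw [show (q:ℝ) * ((1 - s) / ((q:ℝ) - 1)) = (q:ℝ) * (1 - s) / ((q:ℝ) - 1) from by ring]
  rw [betaC_eq_bb]
  unfold Gf
  have hb : ((q:ℝ) - 1) * ((1 - s) / ((q:ℝ) - 1)) = 1 - s := by field_simp
  have hb2 : ((q:ℝ) - 1) * ((1 - s) / ((q:ℝ) - 1)) ^ 2 = (1 - s) ^ 2 / ((q:ℝ) - 1) := by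
    field_simp
  rw [show ((q:ℝ) - 1) * ((1 - s) / ((q:ℝ) - 1) * Real.log ((q:ℝ) * (1 - s) / ((q:ℝ) - 1)))
      = (((q:ℝ) - 1) * ((1 - s) / ((q:ℝ) - 1))) * Real.log ((q:ℝ) * (1 - s) / ((q:ℝ) - 1))
    from by ring, hb, hb2]
  ring

lemma fFE_unif_val (hq : 3 ≤ q) : fFE q (betaC q) 0 (unifP q) = -(betaC q) / (2 * q) := by
  have hq0 : (0:ℝ) < q := q_pos hq
  unfold fFE unifP
  have e1 : (q:ℝ) * (1 / q) = 1 := by field_simp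
  rw [e1, Real.log_one]
  simp only [mul_zero, Finset.sum_const, card_univ, Fintype.card_fin, nsmul_eq_mul]
  have : (1 / (q:ℝ)) ^ 2 = 1 / q ^ 2 := by field_simp
  rw [this]
  field_simp
  ring

lemma wP_eq (hq : 3 ≤ q) (j : Fin q) :
    wP q j = fun i => if i = j then (1 - 1/(q:ℝ)) else (1 - (1 - 1/(q:ℝ))) / ((q:ℝ) - 1) := by
  have hq0 : (0:ℝ) < q := q_pos hq
  have hq1 : (0:ℝ) < (q:ℝ) - 1 := by linarith [hQcast hq]
  funext i
  unfold wP
  by_cases h : i = j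
  · rw [if_pos h, if_pos h]
    field_simp
  · rw [if_neg h, if_neg h]
    field_simp; ring

lemma wP_mem (hq : 3 ≤ q) (j : Fin q) : wP q j ∈ simplexH q := by
  have hq0 : (0:ℝ) < q := q_pos hq
  have hq1 : (0:ℝ) < (q:ℝ) - 1 := by linarith [hQcast hq]
  constructor
  · show ∑ i, (if i = j then ((q:ℝ) - 1) / q else 1 / ((q:ℝ) * ((q:ℝ) - 1))) = 1
    rw [sum_ite_point hq (fun t => t) j _ _]
    field_simp
    ring
  · intro i
    unfold wP
    by_cases h : i = j
    · rw [if_pos h]; positivity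
    · rw [if_neg h]; positivity

lemma fFE_wP (hq : 3 ≤ q) (j : Fin q) :
    fFE q (betaC q) 0 (wP q j) = -(betaC q) / (2 * q) := by
  have hq0 : (0:ℝ) < q := q_pos hq
  rw [wP_eq hq j, fFE_two_value hq (1 - 1/(q:ℝ)) j, Gf_at_star (hQcast hq)]
  ring

lemma min_value (hq : 3 ≤ q) : ∀ y ∈ simplexH q, -(betaC q) / (2 * q) ≤ fFE q (betaC q) 0 y := by
  obtain ⟨x, hx⟩ := exists_min hq (betaC q)
  have hβ := betaC_pos hq
  have hval : fFE q (betaC q) 0 x = -(betaC q) / (2 * q) := by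
    have hle : fFE q (betaC q) 0 x ≤ -(betaC q) / (2 * q) := by
      rw [← fFE_unif_val hq]
      exact hx.2 _ (unif_mem hq)
    rcases classify hq hβ hx with h | ⟨j, s, hs1, hs2, hxj, hxo⟩
    · have : x = unifP q := funext h
      rw [this, fFE_unif_val hq]
    · have hxw : x = fun i => if i = j then s else (1 - s) / ((q:ℝ) - 1) := by
        funext i
        by_cases h : i = j
        · rw [if_pos h, h]; exact hxj
        · rw [if_neg h]; exact hxo i h
      rw [hxw, fFE_two_value hq s j] at hle ⊢
      have hG := Gf_nonneg (hQcast hq) (le_of_lt hs1) hs2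
      have hle2 : Gf (q:ℝ) s ≤ 0 := by
        rw [sub_le_iff_le_add] at hle
        simpa [neg_div] using hle
      have : Gf (q:ℝ) s = 0 := le_antisymm hle2 hG
      rw [this]
      ring
  intro y hy
  rw [← hval]
  exact hx.2 y hy

lemma mem_minSet_iff (hq : 3 ≤ q) (x : Fin q → ℝ) :
    x ∈ minSetF q (betaC q) 0 ↔
      x ∈ simplexH q ∧ fFE q (betaC q) 0 x = -(betaC q) / (2 * q) := by
  constructor
  · intro hx
    refine ⟨hx.1, le_antisymm ?_ (min_value hq x hx.1)⟩
    rw [← fFE_unif_val hq]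
    exact hx.2 _ (unif_mem hq)
  · intro ⟨hmem, hval⟩
    refine ⟨hmem, fun y hy => ?_⟩
    rw [hval]
    exact min_value hq y hy

lemma minSet_eq (hq : 3 ≤ q) :
    minSetF q (betaC q) 0 = insert (unifP q) {y | ∃ j : Fin q, y = wP q j} := by
  have hβ := betaC_pos hq
  have hq0 : (0:ℝ) < q := q_pos hq
  have hq1 : (0:ℝ) < (q:ℝ) - 1 := by linarith [hQcast hq]
  ext x
  constructor
  · intro hx
    have hval := (mem_minSet_iff hq x).mp hx
    rcases classify hq hβ hx with h | ⟨j, s, hs1, hs2, hxj, hxo⟩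
    · left
      exact funext h
    · right
      have hxw : x = fun i => if i = j then s else (1 - s) / ((q:ℝ) - 1) := by
        funext i
        by_cases h : i = j
        · rw [if_pos h, h]; exact hxj
        · rw [if_neg h]; exact hxo i h
      have hG0 : Gf (q:ℝ) s = 0 := by
        have h1 := hval.2
        rw [hxw, fFE_two_value hq s j, sub_eq_iff_eq_add] at h1
        simpa [neg_div] using h1
      have hss : s = 1 - 1/(q:ℝ) := by
        by_contra hcon
        have := Gf_pos (hQcast hq) hs1 hs2 hcon
        linarith
      refine ⟨j, ?_⟩
      rw [hxw, wP_eq hq j, hss]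
  · intro hx
    rcases hx with h | ⟨j, hj⟩
    · rw [mem_minSet_iff hq]
      rw [h]
      exact ⟨unif_mem hq, fFE_unif_val hq⟩
    · rw [mem_minSet_iff hq, hj]
      exact ⟨wP_mem hq j, fFE_wP hq j⟩

lemma perm_set_eq (hq : 3 ≤ q) :
    {y : Fin q → ℝ | ∃ π : Equiv.Perm (Fin q), y = wP q 0 ∘ π}
      = {y : Fin q → ℝ | ∃ j : Fin q, y = wP q j} := by
  ext y
  constructor
  · rintro ⟨π, rfl⟩
    refine ⟨π.symm 0, funext fun i => ?_⟩
    show wP q 0 (π i) = wP q (π.symm 0) i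
    unfold wP
    by_cases h : π i = 0
    · rw [if_pos h, if_pos]
      have := congrArg π.symm h
      rw [Equiv.symm_apply_apply] at this
      exact this
    · rw [if_neg h, if_neg]
      intro hc
      apply h
      rw [hc]
      exact π.apply_symm_apply 0
  · rintro ⟨j, rfl⟩
    refine ⟨Equiv.swap 0 j, funext fun i => ?_⟩
    show wP q j i = wP q 0 (Equiv.swap 0 j i)
    unfold wP
    by_cases h : i = j
    · rw [if_pos h, if_pos]
      rw [h]
      exact Equiv.swap_apply_right 0 j
    · rw [if_neg h, if_neg]
      intro hc
      apply h
      have h2 : Equiv.swap 0 j j = 0 := Equiv.swap_apply_right 0 j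
      exact (Equiv.swap 0 j).injective (hc.trans h2.symm)

lemma wP_injective (hq : 3 ≤ q) : Function.Injective (wP q) := by
  have hq3 := hQcast hq
  have hq0 : (0:ℝ) < q := q_pos hq
  have hq1 : (0:ℝ) < (q:ℝ) - 1 := by linarith
  intro j k h
  by_contra hjk
  have h1 := congrFun h j
  unfold wP at h1
  rw [if_pos rfl, if_neg hjk] at h1
  rw [div_eq_div_iff (ne_of_gt hq0) (by positivity)] at h1
  nlinarith [mul_pos (mul_pos hq0 hq0) (show (0:ℝ) < (q:ℝ) - 2 by linarith)]

lemma unif_ne_wP (hq : 3 ≤ q) (j : Fin q) : unifP q ≠ wP q j := by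
  have hq3 := hQcast hq
  have hq0 : (0:ℝ) < q := q_pos hq
  intro h
  have h1 := congrFun h j
  unfold unifP wP at h1
  rw [if_pos rfl] at h1
  rw [div_eq_div_iff (ne_of_gt hq0) (ne_of_gt hq0)] at h1
  nlinarith [mul_pos hq0 (show (0:ℝ) < (q:ℝ) - 2 by linarith)]

lemma minSet_ncard (hq : 3 ≤ q) : (minSetF q (betaC q) 0).ncard = q + 1 := by
  rw [minSet_eq hq]
  have hT : {y : Fin q → ℝ | ∃ j : Fin q, y = wP q j} = Set.range (wP q) := by
    ext y
    exact ⟨fun ⟨j, h⟩ => ⟨j, h.symm⟩, fun ⟨j, h⟩ => ⟨j, h.symm⟩⟩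
  rw [hT]
  have hnotmem : unifP q ∉ Set.range (wP q) := by
    rintro ⟨j, hj⟩
    exact unif_ne_wP hq j hj.symm
  rw [Set.ncard_insert_of_notMem hnotmem (Set.finite_range _)]
  have : (Set.range (wP q)).ncard = q := by
    rw [← Set.image_univ, Set.ncard_image_of_injective _ (wP_injective hq), Set.ncard_univ,
      Nat.card_eq_fintype_card, Fintype.card_fin]
  rw [this]



/-- At h = 0 and β = β_c, the set of global minimum points of f_{β_c,0} on ℋ
consists of exactly q+1 points: the uniform vector together with the q
coordinate permutations of ((q-1)/q, 1/(q(q-1)), …, 1/(q(q-1))). -/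
theorem stmt_4 (q : ℕ) [NeZero q] (hq : 3 ≤ q) :
    minSetF q (betaC q) 0 =
      insert (fun _ => 1 / (q : ℝ))
        {y | ∃ π : Equiv.Perm (Fin q),
          y = (fun i : Fin q =>
            if i = 0 then ((q : ℝ) - 1) / q else 1 / (q * ((q : ℝ) - 1))) ∘ π} ∧
    (minSetF q (betaC q) 0).ncard = q + 1 := by
  constructor
  · rw [minSet_eq hq, perm_set_eq hq |>.symm]
    rfl
  · exact minSet_ncard hq

end CWP
end
end

section
/- Let q ≥ 3, β > 0 and h ≥ 0. Then the set of global minimum points of f_{β,h} on the simplex ℋ coincides with the set of global minimum points of G_{β,h} on ℝ^q; in particular every global minimum point of G_{β,h} lies in ℋ. -/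
open Finset

noncomputable section

namespace CWP

/-- The function G_{β,h}. -/
def G (q : ℕ) [NeZero q] (β h : ℝ) (u : Fin q → ℝ) : ℝ :=
  β / 2 * (∑ i, u i ^ 2) -
    Real.log (∑ k, Real.exp (β * u k + if k = 0 then h else 0))

/-- Partition function. -/
def Zf (q : ℕ) [NeZero q] (β h : ℝ) (u : Fin q → ℝ) : ℝ :=
  ∑ k, Real.exp (β * u k + if k = 0 then h else 0)

/-- The Gibbs probability vector associated with u. -/
def pf (q : ℕ) [NeZero q] (β h : ℝ) (u : Fin q → ℝ) (k : Fin q) : ℝ :=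
  Real.exp (β * u k + if k = 0 then h else 0) / Zf q β h u

lemma Zf_pos (q : ℕ) [NeZero q] (β h : ℝ) (u : Fin q → ℝ) : 0 < Zf q β h u := by
  have : Nonempty (Fin q) := ⟨0⟩
  exact Finset.sum_pos (fun k _ => Real.exp_pos _) Finset.univ_nonempty

lemma pf_pos (q : ℕ) [NeZero q] (β h : ℝ) (u : Fin q → ℝ) (k : Fin q) :
    0 < pf q β h u k :=
  div_pos (Real.exp_pos _) (Zf_pos q β h u)

lemma pf_sum (q : ℕ) [NeZero q] (β h : ℝ) (u : Fin q → ℝ) :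
    ∑ k, pf q β h u k = 1 := by
  unfold pf
  rw [← Finset.sum_div]
  exact div_self (Zf_pos q β h u).ne'

lemma pf_mem (q : ℕ) [NeZero q] (β h : ℝ) (u : Fin q → ℝ) :
    pf q β h u ∈ simplexH q :=
  ⟨pf_sum q β h u, fun k => (pf_pos q β h u k).le⟩

lemma log_pf (q : ℕ) [NeZero q] (β h : ℝ) (u : Fin q → ℝ) (k : Fin q) :
    Real.log (pf q β h u k) =
      β * u k + (if k = 0 then h else 0) - Real.log (Zf q β h u) := by
  unfold pf
  rw [Real.log_div (Real.exp_ne_zero _) (Zf_pos q β h u).ne', Real.log_exp]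

lemma G_eq (q : ℕ) [NeZero q] (β h : ℝ) (u : Fin q → ℝ) :
    G q β h u = fFE q β h (pf q β h u) - Real.log q
      + β / 2 * ∑ k, (u k - pf q β h u k) ^ 2 := by
  have hq0 : (q : ℝ) ≠ 0 := Nat.cast_ne_zero.mpr (NeZero.ne q)
  have hterm : ∀ k ∈ Finset.univ, pf q β h u k * Real.log (q * pf q β h u k)
      = pf q β h u k * Real.log q + β * (pf q β h u k * u k)
        + (if k = 0 then pf q β h u k * h else 0)
        - pf q β h u k * Real.log (Zf q β h u) := by
    intro k _
    rw [Real.log_mul hq0 (pf_pos q β h u k).ne', log_pf]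
    split_ifs <;> ring
  have h1 : ∑ k, pf q β h u k * Real.log (q * pf q β h u k)
      = Real.log q + β * (∑ k, pf q β h u k * u k) + pf q β h u 0 * h
        - Real.log (Zf q β h u) := by
    rw [Finset.sum_congr rfl hterm, Finset.sum_sub_distrib, Finset.sum_add_distrib,
      Finset.sum_add_distrib, ← Finset.sum_mul, ← Finset.mul_sum, ← Finset.sum_mul,
      pf_sum, Finset.sum_ite_eq' Finset.univ (0 : Fin q)
        (fun k => pf q β h u k * h)]
    simp
  have h2 : ∑ k, (u k - pf q β h u k) ^ 2
      = ∑ k, u k ^ 2 - 2 * (∑ k, pf q β h u k * u k) + ∑ k, pf q β h u k ^ 2 := by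
    rw [Finset.sum_congr rfl
      (fun k (_ : k ∈ Finset.univ) =>
        show (u k - pf q β h u k) ^ 2
          = u k ^ 2 - 2 * (pf q β h u k * u k) + pf q β h u k ^ 2 by ring),
      Finset.sum_add_distrib, Finset.sum_sub_distrib, ← Finset.mul_sum]
  have hZ : Real.log (∑ k, Real.exp (β * u k + if k = 0 then h else 0))
      = Real.log (Zf q β h u) := rfl
  unfold G fFE
  rw [hZ, h1, h2]
  ring

lemma term_ineq (x t S : ℝ) (hx : 0 ≤ x) (hS : 0 < S) :
    x * t - x * Real.log x ≤ Real.exp t / S - x + x * Real.log S := by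
  rcases eq_or_lt_of_le hx with h0 | h0
  · rw [← h0]
    simp
    positivity
  · have key : Real.log (Real.exp t / (x * S)) ≤ Real.exp t / (x * S) - 1 :=
      Real.log_le_sub_one_of_pos (by positivity)
    rw [Real.log_div (Real.exp_ne_zero _) (by positivity), Real.log_exp,
      Real.log_mul h0.ne' hS.ne'] at key
    have hmul := mul_le_mul_of_nonneg_left key hx
    have hxs : x * (Real.exp t / (x * S) - 1) = Real.exp t / S - x := by
      field_simp
    have hexp : x * (t - (Real.log x + Real.log S))
        = x * t - x * Real.log x - x * Real.log S := by ring
    rw [hxs, hexp] at hmul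
    linarith

lemma G_le (q : ℕ) [NeZero q] (β h : ℝ) (x : Fin q → ℝ) (hx : x ∈ simplexH q) :
    G q β h x ≤ fFE q β h x - Real.log q := by
  obtain ⟨hsum, hnn⟩ := hx
  have hq0 : (q : ℝ) ≠ 0 := Nat.cast_ne_zero.mpr (NeZero.ne q)
  have hS : 0 < Zf q β h x := Zf_pos q β h x
  -- Step A : ∑ x log(q x) = log q + ∑ x log x
  have hA : ∑ i, x i * Real.log (q * x i)
      = Real.log q + ∑ i, x i * Real.log (x i) := by
    have : ∀ i ∈ Finset.univ, x i * Real.log (q * x i)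
        = x i * Real.log q + x i * Real.log (x i) := by
      intro i _
      rcases eq_or_lt_of_le (hnn i) with h0 | h0
      · rw [← h0]; simp
      · rw [Real.log_mul hq0 h0.ne']; ring
    rw [Finset.sum_congr rfl this, Finset.sum_add_distrib, ← Finset.sum_mul, hsum,
      one_mul]
  -- Step B : Gibbs inequality
  have hB : ∑ k, (x k * (β * x k + if k = 0 then h else 0) - x k * Real.log (x k))
      ≤ ∑ k, (Real.exp (β * x k + if k = 0 then h else 0) / Zf q β h x - x k
          + x k * Real.log (Zf q β h x)) :=
    Finset.sum_le_sum fun k _ => term_ineq (x k) _ _ (hnn k) hS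
  have hBR : ∑ k, (Real.exp (β * x k + if k = 0 then h else 0) / Zf q β h x - x k
        + x k * Real.log (Zf q β h x)) = Real.log (Zf q β h x) := by
    rw [Finset.sum_add_distrib, Finset.sum_sub_distrib, ← Finset.sum_div,
      ← Finset.sum_mul, hsum]
    show Zf q β h x / Zf q β h x - 1 + 1 * Real.log (Zf q β h x) = _
    rw [div_self hS.ne']
    ring
  have hBL : ∑ k, (x k * (β * x k + if k = 0 then h else 0) - x k * Real.log (x k))
      = β * (∑ k, x k ^ 2) + h * x 0 - ∑ k, x k * Real.log (x k) := by
    have : ∀ k ∈ Finset.univ, x k * (β * x k + if k = 0 then h else 0)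
        - x k * Real.log (x k)
        = β * x k ^ 2 + (if k = 0 then h * x k else 0) - x k * Real.log (x k) := by
      intro k _
      split_ifs <;> ring
    rw [Finset.sum_congr rfl this, Finset.sum_sub_distrib, Finset.sum_add_distrib,
      ← Finset.mul_sum, Finset.sum_ite_eq' Finset.univ (0 : Fin q)
        (fun k => h * x k)]
    simp
  rw [hBR, hBL] at hB
  have hZ : Real.log (∑ k, Real.exp (β * x k + if k = 0 then h else 0))
      = Real.log (Zf q β h x) := rfl
  unfold G fFE
  rw [hZ, hA]
  linarith

/-- For β > 0 and h ≥ 0 the global minimum points of f_{β,h} on ℋ coincide with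
the global minimum points of G_{β,h} on ℝ^q; in particular every global minimum
point of G_{β,h} lies in ℋ. -/
theorem stmt_5 (q : ℕ) [NeZero q] (hq : 3 ≤ q) (β h : ℝ) (hβ : 0 < β) (hh : 0 ≤ h) :
    minSetF q β h = {u | ∀ y, G q β h u ≤ G q β h y} ∧
    ∀ u : Fin q → ℝ, (∀ y, G q β h u ≤ G q β h y) → u ∈ simplexH q := by
  have key1 : ∀ u : Fin q → ℝ, fFE q β h (pf q β h u) - Real.log q ≤ G q β h u := by
    intro u
    have h1 := G_eq q β h u
    have hsq : 0 ≤ ∑ k, (u k - pf q β h u k) ^ 2 :=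
      Finset.sum_nonneg fun k _ => sq_nonneg _
    nlinarith
  have hmain : minSetF q β h = {u | ∀ y, G q β h u ≤ G q β h y} := by
    ext x
    simp only [minSetF, Set.mem_setOf_eq]
    constructor
    · rintro ⟨hxH, hmin⟩ y
      calc G q β h x ≤ fFE q β h x - Real.log q := G_le q β h x hxH
        _ ≤ fFE q β h (pf q β h y) - Real.log q := by
            have := hmin _ (pf_mem q β h y); linarith
        _ ≤ G q β h y := key1 y
    · intro hu
      have h1 := G_eq q β h x
      have h2 := G_le q β h (pf q β h x) (pf_mem q β h x)
      have h3 := hu (pf q β h x)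
      have hA : 0 ≤ ∑ k, (x k - pf q β h x k) ^ 2 :=
        Finset.sum_nonneg fun k _ => sq_nonneg _
      have hB : β / 2 * ∑ k, (x k - pf q β h x k) ^ 2 ≤ 0 := by linarith
      have hz : ∑ k, (x k - pf q β h x k) ^ 2 = 0 := by nlinarith
      have hx_eq : x = pf q β h x := by
        funext k
        have := (Finset.sum_eq_zero_iff_of_nonneg
          (fun k (_ : k ∈ Finset.univ) => sq_nonneg (x k - pf q β h x k))).mp hz
          k (Finset.mem_univ k)
        have := sub_eq_zero.mp ((pow_eq_zero_iff (two_ne_zero)).mp this)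
        linarith [this]
      have hxH : x ∈ simplexH q := hx_eq ▸ pf_mem q β h x
      refine ⟨hxH, fun y hy => ?_⟩
      have h6 : β / 2 * ∑ k, (x k - pf q β h x k) ^ 2 = 0 := by rw [hz]; ring
      have h7 : fFE q β h x = fFE q β h (pf q β h x) := by rw [← hx_eq]
      have h4 := G_le q β h y hy
      have h5 := hu y
      linarith
  refine ⟨hmain, fun u hu => ?_⟩
  have : u ∈ minSetF q β h := by rw [hmain]; exact hu
  exact this.1

end CWP
end
end
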